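/- Let φ : EuclideanSpace ℝ (Fin 3) → ℝ and u : EuclideanSpace ℝ (Fin 3) → EuclideanSpace ℝ (Fin 3) be twice continuously differentiable (ContDiff ℝ 2, componentwise for u). Define the vector field w by w y = curl u y + (grad φ y) × (u y) (i.e., w = J¹u). Then for every x, div w x + ⟪grad φ x, w x⟫ = 0; that is, the composition of the shifted flux operators satisfies J² ∘ J¹ = 0 and the shifted operators preserve the de Rham complex property div ∘ curl = 0. -/

import Mathlib

open scoped RealInnerProductSpace

/-- Fréchet directional derivative of a scalar function along the `i`-th
standard basis vector of `EuclideanSpace ℝ (Fin 3)`. -/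
noncomputable def pd (i : Fin 3) (f : EuclideanSpace ℝ (Fin 3) → ℝ)
    (x : EuclideanSpace ℝ (Fin 3)) : ℝ :=
  fderiv ℝ f x (EuclideanSpace.single i 1)

lemma pd_contDiff (i : Fin 3) {f : EuclideanSpace ℝ (Fin 3) → ℝ} (hf : ContDiff ℝ 2 f) :
    ContDiff ℝ 1 (pd i f) :=
  (hf.fderiv_right (m := 1) (by norm_num)).clm_apply contDiff_const

lemma pd_diff (i : Fin 3) {f : EuclideanSpace ℝ (Fin 3) → ℝ} (hf : ContDiff ℝ 2 f) :
    Differentiable ℝ (pd i f) :=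
  (pd_contDiff i hf).differentiable one_ne_zero

lemma pd_add (i : Fin 3) {f g : EuclideanSpace ℝ (Fin 3) → ℝ} {x}
    (hf : DifferentiableAt ℝ f x) (hg : DifferentiableAt ℝ g x) :
    pd i (fun y => f y + g y) x = pd i f x + pd i g x := by
  unfold pd; rw [fderiv_fun_add hf hg]; simp

lemma pd_sub (i : Fin 3) {f g : EuclideanSpace ℝ (Fin 3) → ℝ} {x}
    (hf : DifferentiableAt ℝ f x) (hg : DifferentiableAt ℝ g x) :
    pd i (fun y => f y - g y) x = pd i f x - pd i g x := by
  unfold pd; rw [fderiv_fun_sub hf hg]; simp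

lemma pd_mul (i : Fin 3) {f g : EuclideanSpace ℝ (Fin 3) → ℝ} {x}
    (hf : DifferentiableAt ℝ f x) (hg : DifferentiableAt ℝ g x) :
    pd i (fun y => f y * g y) x = pd i f x * g x + f x * pd i g x := by
  unfold pd; rw [fderiv_fun_mul hf hg]; simp; ring

lemma pd_comm (i j : Fin 3) {f : EuclideanSpace ℝ (Fin 3) → ℝ} (hf : ContDiff ℝ 2 f) (x) :
    pd i (pd j f) x = pd j (pd i f) x := by
  have hs : IsSymmSndFDerivAt ℝ f x :=
    hf.contDiffAt.isSymmSndFDerivAt (by norm_num)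
  have hd : DifferentiableAt ℝ (fderiv ℝ f) x :=
    ((hf.fderiv_right (m := 1) (by norm_num)).differentiable one_ne_zero) x
  have key : ∀ v u : EuclideanSpace ℝ (Fin 3),
      fderiv ℝ (fun y => fderiv ℝ f y v) x u = fderiv ℝ (fderiv ℝ f) x u v := by
    intro v u
    rw [fderiv_clm_apply hd (differentiableAt_const v)]
    simp
  unfold pd
  rw [key, key, hs]

lemma gradient_apply' (φ : EuclideanSpace ℝ (Fin 3) → ℝ) (y : EuclideanSpace ℝ (Fin 3)) (i : Fin 3) :
    gradient φ y i = pd i φ y := by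
  have h1 : ⟪gradient φ y, EuclideanSpace.single i (1:ℝ)⟫ = fderiv ℝ φ y (EuclideanSpace.single i 1) :=
    InnerProductSpace.toDual_symm_apply
  rw [EuclideanSpace.inner_single_right] at h1
  simpa [pd] using h1

lemma pd_w (i a b c d : Fin 3) (φ : EuclideanSpace ℝ (Fin 3) → ℝ)
    (u : EuclideanSpace ℝ (Fin 3) → EuclideanSpace ℝ (Fin 3))
    (hφ : ContDiff ℝ 2 φ) (hu : ∀ j, ContDiff ℝ 2 (fun y => u y j))
    (x : EuclideanSpace ℝ (Fin 3)) :
    pd i (fun y => (pd a (fun z => u z c) y - pd b (fun z => u z d) y) +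
        (pd a φ y * u y c - pd b φ y * u y d)) x
    = (pd i (pd a (fun z => u z c)) x - pd i (pd b (fun z => u z d)) x) +
      ((pd i (pd a φ) x * u x c + pd a φ x * pd i (fun z => u z c) x)
        - (pd i (pd b φ) x * u x d + pd b φ x * pd i (fun z => u z d) x)) := by
  have duc : DifferentiableAt ℝ (fun z => u z c) x := ((hu c).differentiable (by norm_num)) x
  have dud : DifferentiableAt ℝ (fun z => u z d) x := ((hu d).differentiable (by norm_num)) x
  have d1 : DifferentiableAt ℝ (pd a (fun z => u z c)) x := pd_diff a (hu c) x
  have d2 : DifferentiableAt ℝ (pd b (fun z => u z d)) x := pd_diff b (hu d) x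
  have d3 : DifferentiableAt ℝ (pd a φ) x := pd_diff a hφ x
  have d4 : DifferentiableAt ℝ (pd b φ) x := pd_diff b hφ x
  rw [pd_add i (d1.fun_sub d2) ((d3.fun_mul duc).fun_sub (d4.fun_mul dud)),
      pd_sub i d1 d2, pd_sub i (d3.fun_mul duc) (d4.fun_mul dud),
      pd_mul i d3 duc, pd_mul i d4 dud]


/-- Componentwise curl of a vector field on `EuclideanSpace ℝ (Fin 3)`. -/
noncomputable def curl3 (F : EuclideanSpace ℝ (Fin 3) → EuclideanSpace ℝ (Fin 3))
    (x : EuclideanSpace ℝ (Fin 3)) : EuclideanSpace ℝ (Fin 3) :=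
  WithLp.toLp 2 ![pd 1 (fun y => F y 2) x - pd 2 (fun y => F y 1) x,
    pd 2 (fun y => F y 0) x - pd 0 (fun y => F y 2) x,
    pd 0 (fun y => F y 1) x - pd 1 (fun y => F y 0) x]

/-- Divergence of a vector field on `EuclideanSpace ℝ (Fin 3)`. -/
noncomputable def div3 (F : EuclideanSpace ℝ (Fin 3) → EuclideanSpace ℝ (Fin 3))
    (x : EuclideanSpace ℝ (Fin 3)) : ℝ :=
  ∑ i : Fin 3, pd i (fun y => F y i) x

/-- Three-dimensional cross product on `EuclideanSpace ℝ (Fin 3)`. -/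
noncomputable def cross3 (a b : EuclideanSpace ℝ (Fin 3)) : EuclideanSpace ℝ (Fin 3) :=
  WithLp.toLp 2 (crossProduct a b)

/-- The composition of the shifted flux operators `J² ∘ J¹` vanishes:
the shifted operators preserve the de Rham complex property `div ∘ curl = 0`. -/
theorem shifted_flux_div_curl_eq_zero
    (φ : EuclideanSpace ℝ (Fin 3) → ℝ)
    (u : EuclideanSpace ℝ (Fin 3) → EuclideanSpace ℝ (Fin 3))
    (hφ : ContDiff ℝ 2 φ)
    (hu : ∀ j, ContDiff ℝ 2 (fun y => u y j))
    (w : EuclideanSpace ℝ (Fin 3) → EuclideanSpace ℝ (Fin 3))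
    (hw : ∀ y, w y = curl3 u y + cross3 (gradient φ y) (u y))
    (x : EuclideanSpace ℝ (Fin 3)) :
    div3 w x + ⟪gradient φ x, w x⟫ = 0 := by
  have hw0 : (fun y => w y 0) = fun y =>
      (pd 1 (fun z => u z 2) y - pd 2 (fun z => u z 1) y) +
      (pd 1 φ y * u y 2 - pd 2 φ y * u y 1) := by
    funext y
    rw [hw]
    simp [curl3, cross3, cross_apply, gradient_apply', PiLp.add_apply]
  have hw1 : (fun y => w y 1) = fun y =>
      (pd 2 (fun z => u z 0) y - pd 0 (fun z => u z 2) y) +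
      (pd 2 φ y * u y 0 - pd 0 φ y * u y 2) := by
    funext y
    rw [hw]
    simp [curl3, cross3, cross_apply, gradient_apply', PiLp.add_apply]
  have hw2 : (fun y => w y 2) = fun y =>
      (pd 0 (fun z => u z 1) y - pd 1 (fun z => u z 0) y) +
      (pd 0 φ y * u y 1 - pd 1 φ y * u y 0) := by
    funext y
    rw [hw]
    simp [curl3, cross3, cross_apply, gradient_apply', PiLp.add_apply]
  have hdiv : div3 w x =
      pd 0 (fun y => w y 0) x + pd 1 (fun y => w y 1) x + pd 2 (fun y => w y 2) x := by
    simp [div3, Fin.sum_univ_three]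
  have hinner : ⟪gradient φ x, w x⟫ =
      pd 0 φ x * w x 0 + pd 1 φ x * w x 1 + pd 2 φ x * w x 2 := by
    rw [PiLp.inner_apply]
    simp only [Fin.sum_univ_three, gradient_apply', RCLike.inner_apply, conj_trivial]
    ring
  rw [hdiv, hinner, hw0, hw1, hw2,
      pd_w 0 1 2 2 1 φ u hφ hu x, pd_w 1 2 0 0 2 φ u hφ hu x, pd_w 2 0 1 1 0 φ u hφ hu x,
      congrFun hw0 x, congrFun hw1 x, congrFun hw2 x]
  have s1 := pd_comm 0 1 (hu 2) x
  have s2 := pd_comm 1 2 (hu 0) x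
  have s3 := pd_comm 2 0 (hu 1) x
  have s4 := pd_comm 0 1 hφ x
  have s5 := pd_comm 1 2 hφ x
  have s6 := pd_comm 2 0 hφ x
  linear_combination s1 + s2 + s3 + u x 2 * s4 + u x 0 * s5 + u x 1 * s6
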